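/- Along any solution x(t) of a mass-action system admitting a complex-balanced steady state x*, the time derivative of L(x) = ∑ᵢ xᵢ(ln xᵢ − ln xᵢ* − 1) is d/dt L(x(t)) = ∑_{y→y'} k_{y→y'} x^y ⟨ln x − ln x*, y' − y⟩, and this quantity is ≤ 0 for all x ∈ ℝ^n_{>0}. -/

import Mathlib

/-- `e^a (b - a) ≤ e^b - e^a`. -/
lemma exp_key_ineq (a b : ℝ) : Real.exp a * (b - a) ≤ Real.exp b - Real.exp a := by
  have h := Real.add_one_le_exp (b - a)
  have h2 : Real.exp a * ((b - a) + 1) ≤ Real.exp a * Real.exp (b - a) :=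
    mul_le_mul_of_nonneg_left h (Real.exp_nonneg a)
  rw [← Real.exp_add] at h2
  have : a + (b - a) = b := by ring
  rw [this] at h2
  nlinarith [Real.exp_pos a]

/-- Product of rpow's of positive numbers as an exponential. -/
lemma prod_rpow_exp {n : ℕ} (z y : Fin n → ℝ) (hz : ∀ i, 0 < z i) :
    ∏ i, z i ^ (y i) = Real.exp (∑ i, Real.log (z i) * y i) := by
  rw [Real.exp_sum]
  refine Finset.prod_congr rfl fun i _ => ?_
  rw [Real.rpow_def_of_pos (hz i)]

open Classical in
/-- Along any positive solution of a mass-action system admitting a complex-balanced steady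
state `x*`, the derivative of `L(x) = ∑ i, x i (ln (x i) − ln (x* i) − 1)` equals
`∑_{y→y'} k_{y→y'} x^y ⟨ln x − ln x*, y' − y⟩`, and this quantity is `≤ 0` at every
positive state. -/
theorem lyapunov_derivative_nonpositive
    {n : ℕ} {R : Type*} [Fintype R]
    (src tgt : R → (Fin n → ℝ)) (k : R → ℝ) (hk : ∀ r, 0 < k r)
    (xstar : Fin n → ℝ) (hxstar : ∀ i, 0 < xstar i)
    (hcb : ∀ y : Fin n → ℝ,
      ∑ r, (if src r = y then k r * ∏ i, xstar i ^ (src r i) else 0)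
        = ∑ r, (if tgt r = y then k r * ∏ i, xstar i ^ (src r i) else 0))
    (x : ℝ → (Fin n → ℝ)) (hpos : ∀ t i, 0 < x t i)
    (hode : ∀ t, HasDerivAt x
      (∑ r, (k r * ∏ i, x t i ^ (src r i)) • (tgt r - src r)) t) :
    (∀ t, HasDerivAt (fun s => ∑ i, x s i * (Real.log (x s i) - Real.log (xstar i) - 1))
      (∑ r, (k r * ∏ i, x t i ^ (src r i)) *
        ∑ i, (Real.log (x t i) - Real.log (xstar i)) * (tgt r i - src r i)) t) ∧
    (∀ z : Fin n → ℝ, (∀ i, 0 < z i) →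
      ∑ r, (k r * ∏ i, z i ^ (src r i)) *
        ∑ i, (Real.log (z i) - Real.log (xstar i)) * (tgt r i - src r i) ≤ 0) := by
  constructor
  · -- derivative computation
    intro t
    set V : Fin n → ℝ := ∑ r, (k r * ∏ i, x t i ^ (src r i)) • (tgt r - src r) with hV
    have hVi : ∀ i, HasDerivAt (fun s => x s i) (V i) t := hasDerivAt_pi.mp (hode t)
    have hterm : ∀ i : Fin n, HasDerivAt
        (fun s => x s i * (Real.log (x s i) - Real.log (xstar i) - 1))
        (V i * (Real.log (x t i) - Real.log (xstar i) - 1)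
          + x t i * ((x t i)⁻¹ * V i)) t := by
      intro i
      have hlog : HasDerivAt (fun s => Real.log (x s i)) ((x t i)⁻¹ * V i) t :=
        by have := (Real.hasDerivAt_log (hpos t i).ne').comp t (hVi i); exact this
      exact (hVi i).mul ((hlog.sub_const _).sub_const _)
    have hs := HasDerivAt.fun_sum (u := Finset.univ) (fun i _ => hterm i)
    refine hs.congr_deriv ?_
    symm
    have hsimp : ∀ i : Fin n,
        V i * (Real.log (x t i) - Real.log (xstar i) - 1) + x t i * ((x t i)⁻¹ * V i)
          = V i * (Real.log (x t i) - Real.log (xstar i)) := by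
      intro i
      rw [mul_inv_cancel_left₀ (hpos t i).ne']
      ring
    rw [Finset.sum_congr rfl (fun i _ => hsimp i)]
    have hVexp : ∀ i : Fin n,
        V i = ∑ r, (k r * ∏ j, x t j ^ (src r j)) * (tgt r i - src r i) := by
      intro i
      rw [hV]
      simp [Finset.sum_apply, Pi.smul_apply, Pi.sub_apply, smul_eq_mul]
    calc ∑ r, (k r * ∏ i, x t i ^ (src r i)) *
          ∑ i, (Real.log (x t i) - Real.log (xstar i)) * (tgt r i - src r i)
        = ∑ r, ∑ i, (k r * ∏ j, x t j ^ (src r j)) * (tgt r i - src r i)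
            * (Real.log (x t i) - Real.log (xstar i)) := by
          refine Finset.sum_congr rfl fun r _ => ?_
          rw [Finset.mul_sum]
          exact Finset.sum_congr rfl fun i _ => by ring
      _ = ∑ i, ∑ r, (k r * ∏ j, x t j ^ (src r j)) * (tgt r i - src r i)
            * (Real.log (x t i) - Real.log (xstar i)) := Finset.sum_comm
      _ = ∑ i, V i * (Real.log (x t i) - Real.log (xstar i)) := by
          refine Finset.sum_congr rfl fun i _ => ?_
          rw [hVexp i, Finset.sum_mul]
  · -- nonpositivity
    intro z hz
    set u : Fin n → ℝ := fun i => Real.log (z i) - Real.log (xstar i) with hu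
    set F : (Fin n → ℝ) → ℝ := fun y => Real.exp (∑ i, u i * y i) with hF
    set κ : R → ℝ := fun r => k r * ∏ i, xstar i ^ (src r i) with hκ
    have hκpos : ∀ r, 0 < κ r := by
      intro r
      exact mul_pos (hk r) (Finset.prod_pos fun i _ => Real.rpow_pos_of_pos (hxstar i) _)
    -- rewrite each term
    have hterm : ∀ r, (k r * ∏ i, z i ^ (src r i)) *
        ∑ i, (Real.log (z i) - Real.log (xstar i)) * (tgt r i - src r i)
        = κ r * (F (src r) * ((∑ i, u i * tgt r i) - (∑ i, u i * src r i))) := by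
      intro r
      have h1 : ∏ i, z i ^ (src r i)
          = (∏ i, xstar i ^ (src r i)) * F (src r) := by
        rw [prod_rpow_exp _ _ hz, prod_rpow_exp _ _ hxstar, hF, ← Real.exp_add]
        congr 1
        rw [← Finset.sum_add_distrib]
        refine Finset.sum_congr rfl fun i _ => ?_
        rw [hu]; ring
      have h2 : ∑ i, (Real.log (z i) - Real.log (xstar i)) * (tgt r i - src r i)
          = (∑ i, u i * tgt r i) - (∑ i, u i * src r i) := by
        rw [← Finset.sum_sub_distrib]
        refine Finset.sum_congr rfl fun i _ => ?_
        rw [hu]; ring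
      rw [h1, h2, hκ]; ring
    rw [Finset.sum_congr rfl (fun r _ => hterm r)]
    -- the exponential inequality
    have hineq : ∀ r, κ r * (F (src r) * ((∑ i, u i * tgt r i) - (∑ i, u i * src r i)))
        ≤ κ r * (F (tgt r) - F (src r)) := by
      intro r
      refine mul_le_mul_of_nonneg_left ?_ (hκpos r).le
      have : F (src r) = Real.exp (∑ i, u i * src r i) := rfl
      have htg : F (tgt r) = Real.exp (∑ i, u i * tgt r i) := rfl
      rw [this, htg]
      exact exp_key_ineq _ _
    have hle := Finset.sum_le_sum (fun r (_ : r ∈ Finset.univ) => hineq r)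
    refine hle.trans ?_
    -- show the telescoping sum is zero using complex balance
    have hsplit : ∑ r, κ r * (F (tgt r) - F (src r))
        = (∑ r, κ r * F (tgt r)) - (∑ r, κ r * F (src r)) := by
      rw [← Finset.sum_sub_distrib]
      exact Finset.sum_congr rfl fun r _ => by ring
    rw [hsplit]
    classical
    set S : Finset (Fin n → ℝ) :=
      (Finset.univ.image src) ∪ (Finset.univ.image tgt) with hS
    have grouping : ∀ (g : R → (Fin n → ℝ)), (∀ r, g r ∈ S) →
        ∑ r, κ r * F (g r) = ∑ y ∈ S, F y * ∑ r, (if g r = y then κ r else 0) := by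
      intro g hg
      have step1 : ∀ r : R, κ r * F (g r)
          = ∑ y ∈ S, (if g r = y then F y * κ r else 0) := by
        intro r
        rw [Finset.sum_ite_eq S (g r) (fun y => F y * κ r)]
        simp [hg r, mul_comm]
      rw [Finset.sum_congr rfl (fun r _ => step1 r), Finset.sum_comm]
      refine Finset.sum_congr rfl fun y _ => ?_
      rw [Finset.mul_sum]
      refine Finset.sum_congr rfl fun r _ => ?_
      split <;> simp
    have hsrc : ∀ r : R, src r ∈ S := fun r => by
      rw [hS]; exact Finset.mem_union_left _ (Finset.mem_image_of_mem _ (Finset.mem_univ r))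
    have htgt : ∀ r : R, tgt r ∈ S := fun r => by
      rw [hS]; exact Finset.mem_union_right _ (Finset.mem_image_of_mem _ (Finset.mem_univ r))
    have heq : ∑ r, κ r * F (tgt r) = ∑ r, κ r * F (src r) := by
      rw [grouping tgt htgt, grouping src hsrc]
      refine Finset.sum_congr rfl fun y _ => ?_
      congr 1
      have := hcb y
      rw [hκ]
      exact (this).symm
    rw [heq, sub_self]
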